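/- arXiv:1105.3461 — 4 statements merged into one kernel-verified Lean document; each statement's English description precedes it below -/
import Mathlib

section
/- For every angle α with 0 < α ≤ π, the function r ↦ arcosh(cosh(r)² − sinh(r)²·cos α) − 2r tends to log((1 − cos α)/2) as r → ∞. (This is the core computation of Lemma A.3: in a 2/3-ideal hyperbolic triangle with material-vertex angle α, the side opposite the material vertex has length ℓ(g) = ℓ(ρ) + ℓ(ρ′) + log((1 − cos α)/2) relative to any horoball neighborhoods of the two ideal vertices.) -/
/-- The inverse hyperbolic cosine: `arcosh x = log (x + √(x² − 1))`. -/
noncomputable def Real.arcoshLog (x : ℝ) : ℝ := Real.log (x + Real.sqrt (x ^ 2 - 1))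

/-- Core computation of Lemma A.3: for `0 < α ≤ π`, the function
`r ↦ arcosh(cosh² r − sinh² r · cos α) − 2r` tends to `log((1 − cos α)/2)` as `r → ∞`. -/
theorem two_thirds_ideal_limit (α : ℝ) (h0 : 0 < α) (hπ : α ≤ Real.pi) :
    Filter.Tendsto
      (fun r : ℝ => Real.arcoshLog (Real.cosh r ^ 2 - Real.sinh r ^ 2 * Real.cos α) - 2 * r)
      Filter.atTop (nhds (Real.log ((1 - Real.cos α) / 2))) := by
  set c : ℝ := 1 - Real.cos α with hc
  have hcpos : 0 < c := by
    have : Real.cos α < 1 := by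
      have := Real.cos_lt_cos_of_nonneg_of_le_pi le_rfl hπ h0
      simpa using this
    linarith
  -- x r = cosh² - sinh² cos α = 1 + c sinh²
  have hx : ∀ r : ℝ, Real.cosh r ^ 2 - Real.sinh r ^ 2 * Real.cos α
      = 1 + c * Real.sinh r ^ 2 := by
    intro r
    have := Real.cosh_sq r
    rw [this]; ring
  set x : ℝ → ℝ := fun r => 1 + c * Real.sinh r ^ 2 with hxdef
  have hx1 : ∀ r, 1 ≤ x r := by
    intro r
    have : 0 ≤ c * Real.sinh r ^ 2 := by positivity
    simp only [hxdef]; linarith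
  set f : ℝ → ℝ := fun r => x r + Real.sqrt (x r ^ 2 - 1) with hfdef
  have hfpos : ∀ r, 0 < f r := by
    intro r
    have h1 := hx1 r
    have h2 : 0 ≤ Real.sqrt (x r ^ 2 - 1) := Real.sqrt_nonneg _
    simp only [hfdef]; linarith
  -- sinh r * exp (-r) → 1/2
  have hs : Filter.Tendsto (fun r : ℝ => Real.sinh r * Real.exp (-r))
      Filter.atTop (nhds (1/2)) := by
    have heq : ∀ r : ℝ, Real.sinh r * Real.exp (-r) = (1 - Real.exp (-2 * r)) / 2 := by
      intro r
      have h1 : Real.exp r * Real.exp (-r) = 1 := by rw [← Real.exp_add]; simp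
      have h2 : Real.exp (-2 * r) = Real.exp (-r) * Real.exp (-r) := by
        rw [← Real.exp_add]; ring_nf
      rw [Real.sinh_eq, h2]
      linear_combination h1 / 2
    simp only [heq]
    have hlin : Filter.Tendsto (fun r : ℝ => -2 * r) Filter.atTop Filter.atBot := by
      have h2 : Filter.Tendsto (fun r : ℝ => (2:ℝ) * r) Filter.atTop Filter.atTop :=
        Filter.Tendsto.const_mul_atTop two_pos Filter.tendsto_id
      exact (Filter.tendsto_neg_atTop_atBot.comp h2).congr fun r => by
        show -(2 * r) = -2 * r; ring
    have he0' : Filter.Tendsto (fun r : ℝ => Real.exp (-2 * r)) Filter.atTop (nhds 0) :=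
      Real.tendsto_exp_atBot.comp hlin
    have h2 : Filter.Tendsto (fun r : ℝ => (1 - Real.exp (-2 * r)) / 2)
        Filter.atTop (nhds ((1 - 0) / 2)) :=
      (((tendsto_const_nhds : Filter.Tendsto (fun _ : ℝ => (1:ℝ)) Filter.atTop
        (nhds 1)).sub he0').div_const 2)
    simpa using h2
  -- sinh² r * exp(-2r) → 1/4
  have hs2 : Filter.Tendsto (fun r : ℝ => Real.sinh r ^ 2 * Real.exp (-2 * r))
      Filter.atTop (nhds (1/4)) := by
    have heq : ∀ r : ℝ, Real.sinh r ^ 2 * Real.exp (-2 * r)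
        = (Real.sinh r * Real.exp (-r)) ^ 2 := by
      intro r
      have h2 : Real.exp (-r) ^ 2 = Real.exp (-2 * r) := by
        rw [sq, ← Real.exp_add]; ring_nf
      rw [mul_pow, h2]
    simp only [heq]
    have := hs.pow 2
    convert this using 2
    norm_num
  have he0 : Filter.Tendsto (fun r : ℝ => Real.exp (-2 * r)) Filter.atTop (nhds 0) := by
    have hlin : Filter.Tendsto (fun r : ℝ => -2 * r) Filter.atTop Filter.atBot := by
      have h2 : Filter.Tendsto (fun r : ℝ => (2:ℝ) * r) Filter.atTop Filter.atTop :=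
        Filter.Tendsto.const_mul_atTop two_pos Filter.tendsto_id
      exact (Filter.tendsto_neg_atTop_atBot.comp h2).congr fun r => by
        show -(2 * r) = -2 * r; ring
    exact Real.tendsto_exp_atBot.comp hlin
  -- x r * exp(-2r) → c/4
  have hxlim : Filter.Tendsto (fun r : ℝ => x r * Real.exp (-2 * r))
      Filter.atTop (nhds (c/4)) := by
    have heq : ∀ r : ℝ, x r * Real.exp (-2 * r)
        = Real.exp (-2 * r) + c * (Real.sinh r ^ 2 * Real.exp (-2 * r)) := by
      intro r; simp only [hxdef]; ring
    simp only [heq]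
    have := he0.add ((hs2.const_mul c))
    convert this using 2
    ring
  -- sqrt(x²−1) * exp(-2r) → c/4
  have hsqlim : Filter.Tendsto (fun r : ℝ => Real.sqrt (x r ^ 2 - 1) * Real.exp (-2 * r))
      Filter.atTop (nhds (c/4)) := by
    have heq : ∀ r : ℝ, Real.sqrt (x r ^ 2 - 1) * Real.exp (-2 * r)
        = Real.sqrt ((x r * Real.exp (-2 * r)) ^ 2 - (Real.exp (-2 * r)) ^ 2) := by
      intro r
      rw [show (x r * Real.exp (-2 * r)) ^ 2 - (Real.exp (-2 * r)) ^ 2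
          = (x r ^ 2 - 1) * (Real.exp (-2 * r)) ^ 2 by ring,
        Real.sqrt_mul (by nlinarith [hx1 r]), Real.sqrt_sq (Real.exp_nonneg _)]
    simp only [heq]
    have hinner : Filter.Tendsto
        (fun r : ℝ => (x r * Real.exp (-2 * r)) ^ 2 - (Real.exp (-2 * r)) ^ 2)
        Filter.atTop (nhds ((c/4)^2 - 0^2)) := (hxlim.pow 2).sub (he0.pow 2)
    have := (Real.continuous_sqrt.tendsto _).comp hinner
    simp only [Function.comp_def] at this
    rwa [show (c/4)^2 - 0^2 = (c/4)^2 by ring,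
      Real.sqrt_sq (by positivity : (0:ℝ) ≤ c/4)] at this
  -- f r * exp(-2r) → c/2
  have hflim : Filter.Tendsto (fun r : ℝ => f r * Real.exp (-2 * r))
      Filter.atTop (nhds (c/2)) := by
    have heq : ∀ r : ℝ, f r * Real.exp (-2 * r)
        = x r * Real.exp (-2 * r) + Real.sqrt (x r ^ 2 - 1) * Real.exp (-2 * r) := by
      intro r; simp only [hfdef]; ring
    simp only [heq]
    have := hxlim.add hsqlim
    convert this using 2
    ring
  -- take log
  have hlog := hflim.log (by positivity : c/2 ≠ 0)
  have heqfin : ∀ r : ℝ,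
      Real.log (f r * Real.exp (-2 * r))
        = Real.arcoshLog (Real.cosh r ^ 2 - Real.sinh r ^ 2 * Real.cos α) - 2 * r := by
    intro r
    rw [Real.log_mul (ne_of_gt (hfpos r)) (Real.exp_ne_zero _), Real.log_exp,
      Real.arcoshLog, hx r]
    ring
  simp only [heqfin] at hlog
  exact hlog
end

section
/- Let φ = (1 + √5)/2, let a = 2.383 ∈ ℂ and b = 4.222 + 2.657·i ∈ ℂ. Then for every natural number n ≥ 5, 4.3·φⁿ < |f_n·a + f_{n+1}·b| < 4.7·φⁿ. (This is the estimate of Lemma 7.7 for the length ℓ(μ₀ⁿ) of the Fibonacci slope μ₀ⁿ = f_n α₀ + f_{n+1} β₀ on the maximal cusp about T₀.) -/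
set_option maxHeartbeats 1000000

private lemma aux_sq_lb (p A B : ℝ) (hp0 : 0 < p) (hA : 4.102 * p ≤ A)
    (hB : 1.916 * p ≤ B) : (4.3 * p) ^ 2 < A ^ 2 + B ^ 2 := by
  nlinarith [mul_nonneg (by linarith : (0:ℝ) ≤ A - 4.102 * p)
      (by linarith : (0:ℝ) ≤ A + 4.102 * p),
    mul_nonneg (by linarith : (0:ℝ) ≤ B - 1.916 * p)
      (by linarith : (0:ℝ) ≤ B + 1.916 * p),
    mul_pos hp0 hp0]

private lemma aux_sq_ub (p A B : ℝ) (hp0 : 0 < p) (hA0 : 0 ≤ A) (hB0 : 0 ≤ B)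
    (hA : A ≤ 4.14 * p) (hB : B ≤ 1.93 * p) : A ^ 2 + B ^ 2 < (4.7 * p) ^ 2 := by
  nlinarith [mul_nonneg (by linarith : (0:ℝ) ≤ 4.14 * p - A)
      (by linarith : (0:ℝ) ≤ 4.14 * p + A),
    mul_nonneg (by linarith : (0:ℝ) ≤ 1.93 * p - B)
      (by linarith : (0:ℝ) ≤ 1.93 * p + B),
    mul_pos hp0 hp0]

/-- Lemma 7.7, estimate for `ℓ(μ₀ⁿ)`: with `φ = (1+√5)/2`, `a = 2.383` and
`b = 4.222 + 2.657 i` (the translations of `α₀, β₀` on the maximal cusp about `T₀`),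
for every `n ≥ 5` one has `4.3 φⁿ < |fₙ a + fₙ₊₁ b| < 4.7 φⁿ`. -/
theorem fib_slope_length_T0 (n : ℕ) (hn : 5 ≤ n) :
    4.3 * ((1 + Real.sqrt 5) / 2) ^ n <
        ‖(Nat.fib n : ℂ) * (2.383 : ℂ) +
          (Nat.fib (n + 1) : ℂ) * ((4.222 : ℂ) + (2.657 : ℂ) * Complex.I)‖ ∧
      ‖(Nat.fib n : ℂ) * (2.383 : ℂ) +
          (Nat.fib (n + 1) : ℂ) * ((4.222 : ℂ) + (2.657 : ℂ) * Complex.I)‖ <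
        4.7 * ((1 + Real.sqrt 5) / 2) ^ n := by
  have h5 : Real.sqrt 5 ^ 2 = 5 := Real.sq_sqrt (by norm_num)
  have hs0 : (0:ℝ) ≤ Real.sqrt 5 := Real.sqrt_nonneg 5
  have hs1 : 2.236 < Real.sqrt 5 := by nlinarith
  have hs2 : Real.sqrt 5 < 2.2361 := by nlinarith
  have hsne : Real.sqrt 5 ≠ 0 := by positivity
  have hFs : Real.sqrt 5 * (Nat.fib n : ℝ)
      = ((1 + Real.sqrt 5) / 2) ^ n - ((1 - Real.sqrt 5) / 2) ^ n := by
    rw [Real.coe_fib_eq n]; unfold Real.goldenRatio Real.goldenConj; field_simp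
  have hGs : Real.sqrt 5 * (Nat.fib (n+1) : ℝ)
      = ((1 + Real.sqrt 5) / 2) ^ n * ((1 + Real.sqrt 5) / 2)
        - ((1 - Real.sqrt 5) / 2) ^ n * ((1 - Real.sqrt 5) / 2) := by
    rw [Real.coe_fib_eq (n+1)]; unfold Real.goldenRatio Real.goldenConj
    rw [pow_succ, pow_succ]; field_simp
  -- rewrite the complex modulus
  have hz : (Nat.fib n : ℂ) * (2.383 : ℂ) +
          (Nat.fib (n + 1) : ℂ) * ((4.222 : ℂ) + (2.657 : ℂ) * Complex.I)
      = ((2.383 * (Nat.fib n : ℝ) + 4.222 * (Nat.fib (n+1) : ℝ) : ℝ) : ℂ)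
        + ((2.657 * (Nat.fib (n+1) : ℝ) : ℝ) : ℂ) * Complex.I := by
    push_cast; norm_num; ring
  rw [hz, Complex.norm_add_mul_I]
  set s : ℝ := Real.sqrt 5 with hs_def
  set F : ℝ := (Nat.fib n : ℝ) with hF_def
  set G : ℝ := (Nat.fib (n+1) : ℝ) with hG_def
  set p : ℝ := ((1 + s) / 2) ^ n with hp_def
  set q : ℝ := ((1 - s) / 2) ^ n with hq_def
  clear_value s F G p q
  have hF0 : 0 ≤ F := by rw [hF_def]; positivity
  have hG0 : 0 ≤ G := by rw [hG_def]; positivity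
  clear hz hs_def hF_def hG_def hsne
  -- p ≥ 11.08
  have hgold1 : (1:ℝ) < (1 + s) / 2 := by linarith
  have hp5 : ((1 + s) / 2) ^ 5 ≤ p := by
    rw [hp_def]; exact pow_le_pow_right₀ hgold1.le hn
  have hphi5 : ((1 + s) / 2) ^ 5 = (11 + 5 * s) / 2 := by
    linear_combination ((s ^ 3 + 5 * s ^ 2 + 15 * s + 35) / 32) * h5
  have hp : 11.08 ≤ p := by rw [hphi5] at hp5; linarith
  have hp0 : 0 < p := by linarith
  -- q bounds: p * q = ±1
  have hpq : p * q = (-1 : ℝ) ^ n := by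
    rw [hp_def, hq_def, ← mul_pow]
    congr 1
    nlinarith
  have hpq2 : p ^ 2 * q ^ 2 = 1 := by
    have h2 : (p * q) ^ 2 = 1 := by
      rw [hpq, ← pow_mul, mul_comm n 2, pow_mul]; norm_num
    nlinarith [h2]
  have hq2 : q ^ 2 ≤ 0.0082 := by nlinarith [sq_nonneg q, sq_nonneg p]
  have hq_ub : q ≤ 0.091 := by nlinarith
  have hq_lb : -0.091 ≤ q := by nlinarith
  -- bounds on F
  have hFub : F ≤ 0.451 * p := by
    have h1 : 2.236 * F ≤ s * F := by nlinarith
    linarith [hFs, h1]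
  have hFlb : 0.4435 * p ≤ F := by
    have h1 : s * F ≤ 2.2361 * F := by nlinarith
    linarith [hFs, h1]
  -- bounds on G
  have hsp_ub : ((1 + s) / 2) * p ≤ 1.61805 * p := by nlinarith
  have hsp_lb : 1.618 * p ≤ ((1 + s) / 2) * p := by nlinarith
  have hsq_ub : ((1 - s) / 2) * q ≤ 0.0563 := by nlinarith
  have hsq_lb : -0.0563 ≤ ((1 - s) / 2) * q := by nlinarith
  have hGub : G ≤ 0.726 * p := by
    have h1 : 2.236 * G ≤ s * G := by nlinarith
    nlinarith [hGs, h1]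
  have hGlb : 0.7213 * p ≤ G := by
    have h1 : s * G ≤ 2.2361 * G := by nlinarith
    nlinarith [hGs, h1]
  have hReL : 4.102 * p ≤ 2.383 * F + 4.222 * G := by linarith
  have hReU : 2.383 * F + 4.222 * G ≤ 4.14 * p := by linarith
  have hImL : 1.916 * p ≤ 2.657 * G := by linarith
  have hImU : 2.657 * G ≤ 1.93 * p := by linarith
  have hkey1 : (4.3 * p) ^ 2 < (2.383 * F + 4.222 * G) ^ 2 + (2.657 * G) ^ 2 :=
    aux_sq_lb p _ _ hp0 hReL hImL
  have hkey2 : (2.383 * F + 4.222 * G) ^ 2 + (2.657 * G) ^ 2 < (4.7 * p) ^ 2 :=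
    aux_sq_ub p _ _ hp0 (by linarith) (by linarith) hReU hImU
  have hp43 : (0:ℝ) ≤ 4.3 * p := by linarith
  have hp47 : (0:ℝ) < 4.7 * p := by linarith
  exact ⟨(Real.lt_sqrt hp43).mpr hkey1, (Real.sqrt_lt' hp47).mpr hkey2⟩
end

section
/- Let φ = (1 + √5)/2, let a = 7.961 + 1.269·i ∈ ℂ and b = 4.989 ∈ ℂ. Then for every natural number n ≥ 5, 4.3·φⁿ < |f_{n−1}·a + f_n·b| < 4.7·φⁿ. (This is the estimate of Lemma 7.7 for the length ℓ(μ₁ⁿ) of the Fibonacci slope μ₁ⁿ = f_{n−1} α₁ + f_n β₁ on the maximal cusp about T₁.) -/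
set_option maxHeartbeats 1000000

/-- Lemma 7.7, estimate for `ℓ(μ₁ⁿ)`: with `φ = (1+√5)/2`, `a = 7.961 + 1.269 i` and
`b = 4.989` (the translations of `α₁, β₁` on the maximal cusp about `T₁`),
for every `n ≥ 5` one has `4.3 φⁿ < |fₙ₋₁ a + fₙ b| < 4.7 φⁿ`. -/
theorem fib_slope_length_T1 (n : ℕ) (hn : 5 ≤ n) :
    4.3 * ((1 + Real.sqrt 5) / 2) ^ n <
        ‖(Nat.fib (n - 1) : ℂ) * ((7.961 : ℂ) + (1.269 : ℂ) * Complex.I) +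
          (Nat.fib n : ℂ) * (4.989 : ℂ)‖ ∧
      ‖(Nat.fib (n - 1) : ℂ) * ((7.961 : ℂ) + (1.269 : ℂ) * Complex.I) +
          (Nat.fib n : ℂ) * (4.989 : ℂ)‖ <
        4.7 * ((1 + Real.sqrt 5) / 2) ^ n := by
  obtain ⟨m, rfl⟩ : ∃ m, n = m + 1 := ⟨n - 1, (Nat.succ_pred_eq_of_pos (by omega)).symm⟩
  have hm : 4 ≤ m := by omega
  simp only [Nat.add_sub_cancel]
  -- Binet's formula
  have hFe : (Nat.fib m : ℝ) =
      (((1 + Real.sqrt 5) / 2) ^ m - ((1 - Real.sqrt 5) / 2) ^ m) / Real.sqrt 5 :=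
    Real.coe_fib_eq m
  have hGe : (Nat.fib (m + 1) : ℝ) =
      (((1 + Real.sqrt 5) / 2) ^ (m + 1) - ((1 - Real.sqrt 5) / 2) ^ (m + 1)) / Real.sqrt 5 :=
    Real.coe_fib_eq (m + 1)
  set s : ℝ := Real.sqrt 5 with hs
  have hs2 : s ^ 2 = 5 := Real.sq_sqrt (by norm_num)
  have hs0 : (0:ℝ) < s := Real.sqrt_pos.mpr (by norm_num)
  clear_value s
  have hsl : (2.236:ℝ) < s := by nlinarith [hs2, hs0]
  have hsu : s < 2.2361 := by nlinarith [hs2, hs0]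
  set Φ : ℝ := (1 + s) / 2 with hΦ
  set Ψ : ℝ := (1 - s) / 2 with hΨ
  clear_value Φ Ψ
  have hΦl : (1.618:ℝ) < Φ := by rw [hΦ]; linarith
  have hΦu : Φ < 1.61806 := by rw [hΦ]; linarith
  have hΨl : (-0.61806:ℝ) < Ψ := by rw [hΨ]; linarith
  have hΨu : Ψ < -0.618 := by rw [hΨ]; linarith
  set F : ℝ := (Nat.fib m : ℝ) with hFdef
  set G : ℝ := (Nat.fib (m + 1) : ℝ) with hGdef
  set Q : ℝ := Φ ^ m with hQdef
  set P : ℝ := Φ ^ (m + 1) with hPdef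
  set v : ℝ := Ψ ^ m with hvdef
  set u : ℝ := Ψ ^ (m + 1) with hudef
  have hF : F = (Q - v) / s := hFe
  have hG : G = (P - u) / s := hGe
  have hsF : s * F = Q - v := by rw [hF]; field_simp
  have hsG : s * G = P - u := by rw [hG]; field_simp
  have hPQ : P = Φ * Q := by rw [hPdef, hQdef, pow_succ]; ring
  -- bounds on Q
  have hQ : (6.85:ℝ) ≤ Q := by
    rw [hQdef]
    calc (6.85:ℝ) ≤ 1.618 ^ 4 := by norm_num
      _ ≤ Φ ^ 4 := by apply pow_le_pow_left₀ (by norm_num) (le_of_lt hΦl)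
      _ ≤ Φ ^ m := pow_le_pow_right₀ (by linarith) hm
  -- bounds on the conjugate powers
  have habsΨ : |Ψ| ≤ 0.61806 := by rw [abs_le]; constructor <;> linarith
  have habsΨ1 : |Ψ| ≤ 1 := le_trans habsΨ (by norm_num)
  have hv : |v| ≤ 0.146 := by
    rw [hvdef]
    calc |Ψ ^ m| = |Ψ| ^ m := abs_pow Ψ m
      _ ≤ |Ψ| ^ 4 := pow_le_pow_of_le_one (abs_nonneg _) habsΨ1 hm
      _ ≤ 0.61806 ^ 4 := pow_le_pow_left₀ (abs_nonneg _) habsΨ 4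
      _ ≤ 0.146 := by norm_num
  have hu : |u| ≤ 0.0903 := by
    rw [hudef]
    calc |Ψ ^ (m+1)| = |Ψ| ^ (m+1) := abs_pow Ψ (m+1)
      _ ≤ |Ψ| ^ 5 := pow_le_pow_of_le_one (abs_nonneg _) habsΨ1 (by omega)
      _ ≤ 0.61806 ^ 5 := pow_le_pow_left₀ (abs_nonneg _) habsΨ 5
      _ ≤ 0.0903 := by norm_num
  obtain ⟨hv1, hv2⟩ : -0.146 ≤ v ∧ v ≤ 0.146 := abs_le.mp hv
  obtain ⟨hu1, hu2⟩ : -0.0903 ≤ u ∧ u ≤ 0.0903 := abs_le.mp hu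
  have hQ0 : (0:ℝ) < Q := by linarith only [hQ]
  clear_value F G Q P v u
  -- the squared modulus
  set z : ℂ := (Nat.fib m : ℂ) * ((7.961 : ℂ) + (1.269 : ℂ) * Complex.I) +
      (Nat.fib (m + 1) : ℂ) * (4.989 : ℂ) with hz
  clear_value z
  have c1 : ((7.961 : ℝ) : ℂ) = 7.961 := by norm_cast
  have c2 : ((4.989 : ℝ) : ℂ) = 4.989 := by norm_cast
  have c3 : ((1.269 : ℝ) : ℂ) = 1.269 := by norm_cast
  have hzeq : z = ((7.961 * F + 4.989 * G : ℝ) : ℂ) + ((1.269 * F : ℝ) : ℂ) * Complex.I := by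
    rw [hz, hFdef, hGdef]
    simp only [Complex.ofReal_add, Complex.ofReal_mul, Complex.ofReal_natCast, c1, c2, c3]
    ring
  have hA2 : ‖z‖ ^ 2 = (7.961 * F + 4.989 * G) ^ 2 + (1.269 * F) ^ 2 := by
    rw [hzeq, Complex.sq_norm, Complex.normSq_add_mul_I]
  set X : ℝ := 7.961 * (Q - v) + 4.989 * (P - u) with hX
  set Y : ℝ := 1.269 * (Q - v) with hY
  clear_value X Y
  have hXRe : s * (7.961 * F + 4.989 * G) = X := by rw [hX, ← hsF, ← hsG]; ring
  have hYIm : s * (1.269 * F) = Y := by rw [hY, ← hsF]; ring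
  have h5A2 : 5 * ‖z‖ ^ 2 = X ^ 2 + Y ^ 2 := by
    rw [hA2, ← hXRe, ← hYIm]
    linear_combination (-((7.961 * F + 4.989 * G) ^ 2 + (1.269 * F) ^ 2)) * hs2
  have hPl : 1.618 * Q < P := by
    rw [hPQ]; exact mul_lt_mul_of_pos_right hΦl hQ0
  have hPu : P < 1.61806 * Q := by
    rw [hPQ]; exact mul_lt_mul_of_pos_right hΦu hQ0
  have hP0 : 0 < P := by linarith only [hPl, hQ0]
  have hX1 : 15.79 * Q ≤ X := by rw [hX]; linarith only [hv2, hu2, hPl, hQ]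
  have hX2 : X ≤ 16.27 * Q := by rw [hX]; linarith only [hv1, hu1, hPu, hQ]
  have hX0 : 0 ≤ X := by linarith only [hX1, hQ]
  have hY2 : Y ≤ 1.297 * Q := by rw [hY]; linarith only [hv1, hQ]
  have hY0 : 0 ≤ Y := by rw [hY]; linarith only [hv2, hQ]
  have hA0 : 0 ≤ ‖z‖ := norm_nonneg z
  constructor
  · -- lower bound
    have h1 : P ^ 2 < (1.61806 * Q) ^ 2 := by
      apply pow_lt_pow_left₀ hPu hP0.le two_ne_zero
    have h2 : (15.79 * Q) ^ 2 ≤ X ^ 2 := pow_le_pow_left₀ (by positivity) hX1 2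
    have h4 : 5 * (4.3 * P) ^ 2 < X ^ 2 + Y ^ 2 := by
      linarith only [h1, h2, sq_nonneg Y, sq_nonneg Q]
    have hlow : (4.3 * P) ^ 2 < ‖z‖ ^ 2 := by linarith only [h4, h5A2]
    exact lt_of_pow_lt_pow_left₀ 2 hA0 hlow
  · -- upper bound
    have h1 : (1.618 * Q) ^ 2 < P ^ 2 := by
      apply pow_lt_pow_left₀ hPl (by positivity) two_ne_zero
    have h2 : X ^ 2 ≤ (16.27 * Q) ^ 2 := pow_le_pow_left₀ hX0 hX2 2
    have h3 : Y ^ 2 ≤ (1.297 * Q) ^ 2 := pow_le_pow_left₀ hY0 hY2 2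
    have h4 : X ^ 2 + Y ^ 2 < 5 * (4.7 * P) ^ 2 := by
      linarith only [h1, h2, h3, sq_nonneg Q]
    have hup : ‖z‖ ^ 2 < (4.7 * P) ^ 2 := by linarith only [h4, h5A2]
    exact lt_of_pow_lt_pow_left₀ 2 (by positivity) hup
end

section
/- Let a = 2.383 ∈ ℂ and b = 4.222 + 2.657·i ∈ ℂ, and for a natural number m write μ^m = f_m·a + f_{m+1}·b ∈ ℂ. Then for every natural number n ≥ 5: (i) μ^{n−1} − μ^n = −μ^{n−2}; and (ii) for every integer k with k ≠ −1, |μ^{n−1} + k·μ^n| > |μ^{n−2}|. (This is the final claim of Lemma 7.7: every longitude of μ₀ⁿ has the form μ₀^{n−1} + k μ₀ⁿ, and the unique shortest longitude is λ₀ⁿ = μ₀^{n−2}, obtained at k = −1.) -/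
/-- The complex translation representing the Fibonacci slope
`μ^m = f_m α₀ + f_{m+1} β₀` on the maximal cusp torus about `T₀`,
where `α₀ : z ↦ z + 2.383` and `β₀ : z ↦ z + 4.222 + 2.657 i`. -/
noncomputable def fibSlope (m : ℕ) : ℂ :=
  (Nat.fib m : ℂ) * (2.383 : ℂ) + (Nat.fib (m + 1) : ℂ) * ((4.222 : ℂ) + (2.657 : ℂ) * Complex.I)


lemma fibSlope_re (m : ℕ) : (fibSlope m).re = (Nat.fib m : ℝ) * 2.383 + (Nat.fib (m+1) : ℝ) * 4.222 := by
  simp [fibSlope, Complex.add_re, Complex.mul_re]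

lemma fibSlope_im (m : ℕ) : (fibSlope m).im = (Nat.fib (m+1) : ℝ) * 2.657 := by
  simp [fibSlope, Complex.add_im, Complex.mul_im]

lemma fibSlope_re_pos (m : ℕ) : 0 < (fibSlope m).re := by
  rw [fibSlope_re]
  have h1 : 0 < Nat.fib (m+1) := Nat.fib_pos.mpr (by omega)
  have : (1:ℝ) ≤ (Nat.fib (m+1) : ℝ) := by exact_mod_cast h1
  positivity

lemma fibSlope_im_pos (m : ℕ) : 0 < (fibSlope m).im := by
  rw [fibSlope_im]
  have h1 : 0 < Nat.fib (m+1) := Nat.fib_pos.mpr (by omega)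
  have : (1:ℝ) ≤ (Nat.fib (m+1) : ℝ) := by exact_mod_cast h1
  positivity

lemma abs_lt_of_comp (z w : ℂ) (h1 : 0 ≤ z.re) (h2 : 0 ≤ z.im)
    (h3 : z.re < w.re) (h4 : z.im ≤ w.im) : ‖z‖ < ‖w‖ := by
  rw [Complex.norm_def, Complex.norm_def, Complex.normSq_apply, Complex.normSq_apply]
  apply Real.sqrt_lt_sqrt (by positivity)
  nlinarith

lemma fibSlope_recur (m : ℕ) :
    fibSlope (m + 4) - fibSlope (m + 5) = -fibSlope (m + 3) := by
  unfold fibSlope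
  have h1 : Nat.fib (m + 5) = Nat.fib (m + 3) + Nat.fib (m + 4) :=
    Nat.fib_add_two (n := m + 3)
  have h2 : Nat.fib (m + 6) = Nat.fib (m + 4) + Nat.fib (m + 5) :=
    Nat.fib_add_two (n := m + 4)
  push_cast [h1, h2]
  ring

/-- Final claim of Lemma 7.7: for `n ≥ 5`, (i) `μ^{n−1} − μ^n = −μ^{n−2}`, and
(ii) among the longitudes `μ^{n−1} + k μ^n` of `μ^n`, the unique shortest one is
`μ^{n−2}`, obtained at `k = −1`: for every integer `k ≠ −1`,
`|μ^{n−1} + k μ^n| > |μ^{n−2}|`. -/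
theorem fib_slope_shortest_longitude (n : ℕ) (hn : 5 ≤ n) :
    fibSlope (n - 1) - fibSlope n = -fibSlope (n - 2) ∧
    ∀ k : ℤ, k ≠ -1 →
      ‖fibSlope (n - 2)‖ < ‖fibSlope (n - 1) + (k : ℂ) * fibSlope n‖ := by
  obtain ⟨m, rfl⟩ : ∃ m, n = m + 5 := ⟨n - 5, by omega⟩
  have e1 : m + 5 - 1 = m + 4 := by omega
  have e2 : m + 5 - 2 = m + 3 := by omega
  rw [e1, e2]
  refine ⟨fibSlope_recur m, ?_⟩
  intro k hk
  have hfib1 : (Nat.fib (m+3) : ℝ) ≤ Nat.fib (m+4) := by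
    exact_mod_cast Nat.fib_mono (by omega)
  have hfib2 : (Nat.fib (m+4) : ℝ) < Nat.fib (m+5) := by
    exact_mod_cast Nat.fib_lt_fib_succ (n := m+4) (by omega)
  have hlt_re : (fibSlope (m+3)).re < (fibSlope (m+4)).re := by
    rw [fibSlope_re, fibSlope_re]; nlinarith
  have hlt_im : (fibSlope (m+3)).im ≤ (fibSlope (m+4)).im := by
    rw [fibSlope_im, fibSlope_im]; nlinarith
  rcases lt_or_ge k 0 with hneg | hpos
  · -- k ≤ -2
    have hk2 : k ≤ -2 := by omega
    obtain ⟨j, hj⟩ : ∃ j : ℕ, (j : ℤ) = -(k + 1) := ⟨(-(k+1)).toNat, by omega⟩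
    have hj1 : 1 ≤ j := by omega
    have key : fibSlope (m+4) + (k:ℂ) * fibSlope (m+5)
        = -(fibSlope (m+3) + (j:ℂ) * fibSlope (m+5)) := by
      have hc : (j:ℂ) = -((k:ℂ) + 1) := by exact_mod_cast congrArg (Int.cast : ℤ → ℂ) hj
      have := fibSlope_recur m
      rw [hc]
      linear_combination this
    rw [key, norm_neg]
    apply abs_lt_of_comp
    · exact (fibSlope_re_pos _).le
    · exact (fibSlope_im_pos _).le
    · have : ((j:ℝ)) * (fibSlope (m+5)).re ≥ 1 * (fibSlope (m+5)).re := by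
        apply mul_le_mul_of_nonneg_right _ (fibSlope_re_pos _).le
        exact_mod_cast hj1
      simp [Complex.add_re, Complex.mul_re]
      nlinarith [fibSlope_re_pos (m+5), fibSlope_im_pos (m+5), fibSlope_re_pos (m+3)]
    · simp [Complex.add_im, Complex.mul_im]
      nlinarith [fibSlope_im_pos (m+5)]
  · -- k ≥ 0
    obtain ⟨j, rfl⟩ : ∃ j : ℕ, k = (j : ℤ) := ⟨k.toNat, by omega⟩
    apply abs_lt_of_comp
    · exact (fibSlope_re_pos _).le
    · exact (fibSlope_im_pos _).le
    · have : (0:ℝ) ≤ (j:ℝ) * (fibSlope (m+5)).re :=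
        mul_nonneg (by positivity) (fibSlope_re_pos _).le
      push_cast
      simp [Complex.add_re, Complex.mul_re]
      nlinarith
    · have : (0:ℝ) ≤ (j:ℝ) * (fibSlope (m+5)).im :=
        mul_nonneg (by positivity) (fibSlope_im_pos _).le
      push_cast
      simp [Complex.add_im, Complex.mul_im]
      nlinarith
end
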